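/- Let β ∈ (0,1) and a ∈ ℝ. For every t ≥ 0, the function u(r) := E_{β,1}(−a r^β) satisfies the Volterra integral equation u(t) = 1 − (a / Γ(β)) ∫_0^t (t − s)^{β−1} u(s) ds, where the integral is a convergent Lebesgue integral on (0, t). -/

import Mathlib

open MeasureTheory Set

/-- The one-parameter Mittag-Leffler function
`E_{β,1}(x) = ∑' k, x^k / Γ(βk + 1)`. -/
noncomputable def mittagLeffler (β x : ℝ) : ℝ :=
  ∑' k : ℕ, x ^ k / Real.Gamma (β * k + 1)

lemma gamma_lb (β y : ℝ) (hβ0 : 0 < β) (hβ1 : β ≤ 1) (hy : 0 < y) :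
    y * Real.Gamma y ≤ Real.Gamma (y + β) * (y + β) ^ (1 - β) := by
  have hyβ : 0 < y + β := by linarith
  have h1 : Real.log (Real.Gamma (y + 1)) ≤
      β * Real.log (Real.Gamma (y + β)) + (1 - β) * Real.log (Real.Gamma (y + β + 1)) := by
    have := Real.convexOn_log_Gamma.2 (mem_Ioi.2 hyβ) (mem_Ioi.2 (by linarith : (0:ℝ) < y + β + 1))
      hβ0.le (by linarith : (0:ℝ) ≤ 1 - β) (by ring)
    have harg : β • (y + β) + (1 - β) • (y + β + 1) = y + 1 := by
      simp only [smul_eq_mul]; ring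
    rw [harg] at this
    simpa using this
  have hΓβ : 0 < Real.Gamma (y + β) := Real.Gamma_pos_of_pos hyβ
  have hΓ1 : Real.Gamma (y + β + 1) = (y + β) * Real.Gamma (y + β) := Real.Gamma_add_one hyβ.ne'
  have h2 : Real.log (Real.Gamma (y + 1)) ≤
      Real.log (Real.Gamma (y + β)) + (1 - β) * Real.log (y + β) := by
    rw [hΓ1, Real.log_mul hyβ.ne' hΓβ.ne'] at h1
    nlinarith [h1]
  have hL : y * Real.Gamma y = Real.Gamma (y + 1) := (Real.Gamma_add_one hy.ne').symm
  rw [hL]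
  have hΓy1 : 0 < Real.Gamma (y + 1) := Real.Gamma_pos_of_pos (by linarith)
  calc Real.Gamma (y + 1) = Real.exp (Real.log (Real.Gamma (y + 1))) := (Real.exp_log hΓy1).symm
    _ ≤ Real.exp (Real.log (Real.Gamma (y + β)) + (1 - β) * Real.log (y + β)) :=
        Real.exp_le_exp.2 h2
    _ = Real.Gamma (y + β) * (y + β) ^ (1 - β) := by
        rw [Real.exp_add, Real.exp_log hΓβ, Real.rpow_def_of_pos hyβ, mul_comm (Real.log _)]

lemma ml_summable (β c x : ℝ) (hβ0 : 0 < β) (hβ1 : β < 1) (hc : 1 ≤ c) :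
    Summable (fun k : ℕ => x ^ k / Real.Gamma (β * k + c)) := by
  apply summable_of_ratio_norm_eventually_le (r := 1/2) (by norm_num)
  have htend : Filter.Tendsto (fun k : ℕ => (β * k + c) ^ β) Filter.atTop Filter.atTop := by
    apply (tendsto_rpow_atTop hβ0).comp
    apply Filter.tendsto_atTop_add_const_right
    exact (tendsto_natCast_atTop_atTop (R := ℝ)).const_mul_atTop hβ0
  filter_upwards [htend.eventually_ge_atTop (4 * |x|)] with k hk
  set y := β * k + c with hy_def
  have hy1 : 1 ≤ y := by
    have : (0:ℝ) ≤ β * k := by positivity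
    simp only [hy_def]; linarith
  have hy : 0 < y := by linarith
  have hΓy : 0 < Real.Gamma y := Real.Gamma_pos_of_pos hy
  have hΓyβ : 0 < Real.Gamma (y + β) := Real.Gamma_pos_of_pos (by linarith)
  -- key: 2 * |x| * Γ y ≤ Γ (y + β)
  have key : 2 * |x| * Real.Gamma y ≤ Real.Gamma (y + β) := by
    have h1 := gamma_lb β y hβ0 hβ1.le hy
    have h2 : (y + β) ^ (1 - β) ≤ 2 * y ^ (1 - β) := by
      calc (y + β) ^ (1 - β) ≤ (2 * y) ^ (1 - β) :=
            Real.rpow_le_rpow (by linarith) (by linarith) (by linarith)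
        _ = 2 ^ (1 - β) * y ^ (1 - β) := Real.mul_rpow (by norm_num) hy.le
        _ ≤ 2 * y ^ (1 - β) := by
            have : (2:ℝ) ^ (1 - β) ≤ 2 ^ (1:ℝ) :=
              Real.rpow_le_rpow_of_exponent_le (by norm_num) (by linarith)
            rw [Real.rpow_one] at this
            have := Real.rpow_nonneg hy.le (1 - β)
            nlinarith
    have h3 : y * Real.Gamma y ≤ Real.Gamma (y + β) * (2 * y ^ (1 - β)) := by
      refine h1.trans ?_
      exact mul_le_mul_of_nonneg_left h2 hΓyβ.le
    have hsplit : y = y ^ (1 - β) * y ^ β := by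
      rw [← Real.rpow_add hy]; norm_num
    have hyb : 0 < y ^ (1 - β) := Real.rpow_pos_of_pos hy _
    have h4 : y ^ β * Real.Gamma y ≤ 2 * Real.Gamma (y + β) := by
      have hmul : y ^ (1-β) * (y ^ β * Real.Gamma y) ≤ y ^ (1-β) * (2 * Real.Gamma (y + β)) := by
        calc y ^ (1-β) * (y ^ β * Real.Gamma y) = y * Real.Gamma y := by
              rw [← mul_assoc, ← hsplit]
          _ ≤ Real.Gamma (y + β) * (2 * y ^ (1-β)) := h3
          _ = y ^ (1-β) * (2 * Real.Gamma (y + β)) := by ring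
      exact le_of_mul_le_mul_left hmul hyb
    nlinarith [hk, hΓy]
  -- conclude the ratio bound
  have harg : β * (k + 1 : ℕ) + c = y + β := by push_cast; ring
  rw [harg]
  have hxk : (0:ℝ) ≤ |x| ^ k := by positivity
  rw [norm_div, norm_div, norm_pow, norm_pow, Real.norm_eq_abs, Real.norm_eq_abs,
    Real.norm_eq_abs, abs_of_pos hΓyβ, abs_of_pos hΓy, pow_succ]
  rw [div_le_iff₀ hΓyβ]
  calc |x| ^ k * |x| ≤ |x| ^ k * (Real.Gamma (y + β) / (2 * Real.Gamma y)) := by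
        refine mul_le_mul_of_nonneg_left ?_ hxk
        rw [le_div_iff₀ (by positivity)]
        nlinarith
    _ = 1 / 2 * (|x| ^ k / Real.Gamma y) * Real.Gamma (y + β) := by
        field_simp

lemma realBeta (u v : ℝ) (hu : 0 < u) (hv : 0 < v) :
    IntervalIntegrable (fun x : ℝ => x ^ (u - 1) * (1 - x) ^ (v - 1)) volume 0 1 ∧
      ∫ x in (0:ℝ)..1, x ^ (u - 1) * (1 - x) ^ (v - 1)
        = Real.Gamma u * Real.Gamma v / Real.Gamma (u + v) := by
  have hu' : 0 < (u : ℂ).re := by simpa using hu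
  have hv' : 0 < (v : ℂ).re := by simpa using hv
  have heq : ∀ x ∈ uIcc (0:ℝ) 1,
      (x : ℂ) ^ ((u : ℂ) - 1) * ((1 : ℂ) - (x : ℂ)) ^ ((v : ℂ) - 1)
        = ((x ^ (u - 1) * (1 - x) ^ (v - 1) : ℝ) : ℂ) := by
    intro x hx
    rw [uIcc_of_le (by norm_num : (0:ℝ) ≤ 1)] at hx
    obtain ⟨hx0, hx1⟩ := hx
    push_cast
    rw [Complex.ofReal_cpow hx0, Complex.ofReal_cpow (by linarith)]
    push_cast
    ring
  -- integrability
  have hconv := Complex.betaIntegral_convergent hu' hv'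
  have hint : IntervalIntegrable (fun x : ℝ => x ^ (u - 1) * (1 - x) ^ (v - 1)) volume 0 1 := by
    rw [intervalIntegrable_iff_integrableOn_Ioc_of_le (by norm_num : (0:ℝ) ≤ 1)]
    rw [intervalIntegrable_iff_integrableOn_Ioc_of_le (by norm_num : (0:ℝ) ≤ 1)] at hconv
    have := hconv.re
    refine (IntegrableOn.congr_fun this ?_ measurableSet_Ioc)
    intro x hx
    have := heq x (by rw [uIcc_of_le (by norm_num : (0:ℝ) ≤ 1)]; exact Ioc_subset_Icc_self hx)
    dsimp only
    rw [this]; exact Complex.ofReal_re _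
  refine ⟨hint, ?_⟩
  have hB : Complex.betaIntegral u v
      = ((∫ x in (0:ℝ)..1, x ^ (u - 1) * (1 - x) ^ (v - 1) : ℝ) : ℂ) := by
    rw [Complex.betaIntegral, intervalIntegral.integral_congr heq,
      intervalIntegral.integral_ofReal]
  have hΓ := Complex.Gamma_mul_Gamma_eq_betaIntegral hu' hv'
  rw [hB, ← Complex.ofReal_add, Complex.Gamma_ofReal, Complex.Gamma_ofReal,
    Complex.Gamma_ofReal, ← Complex.ofReal_mul, ← Complex.ofReal_mul] at hΓ
  have h := Complex.ofReal_injective hΓ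
  have hΓuv : Real.Gamma (u + v) ≠ 0 := (Real.Gamma_pos_of_pos (by linarith)).ne'
  field_simp [h]
  rw [h]; ring

lemma beta_Ioo (b c t : ℝ) (hb : 0 < b) (hc : 0 < c) (ht : 0 < t) :
    IntegrableOn (fun s : ℝ => (t - s) ^ (b - 1) * s ^ (c - 1)) (Ioo 0 t) volume ∧
      ∫ s in Ioo (0:ℝ) t, (t - s) ^ (b - 1) * s ^ (c - 1)
        = Real.Gamma b * Real.Gamma c / Real.Gamma (b + c) * t ^ (b + c - 1) := by
  set f : ℝ → ℝ := fun s => (t - s) ^ (b - 1) * s ^ (c - 1) with hf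
  -- the composed function on (0,1)
  have hcomp : ∀ x ∈ uIcc (0:ℝ) 1,
      f (t * x) = t ^ (b - 1) * t ^ (c - 1) * (x ^ (c - 1) * (1 - x) ^ (b - 1)) := by
    intro x hx
    rw [uIcc_of_le (by norm_num : (0:ℝ) ≤ 1)] at hx
    obtain ⟨hx0, hx1⟩ := hx
    have h1 : t - t * x = t * (1 - x) := by ring
    simp only [hf, h1]
    rw [Real.mul_rpow ht.le (by linarith), Real.mul_rpow ht.le hx0]
    ring
  have hbeta := realBeta c b hc hb
  -- interval integrability of the composed function
  have hg : IntervalIntegrable (fun x => f (t * x)) volume 0 1 := by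
    rw [intervalIntegrable_iff_integrableOn_Ioc_of_le (by norm_num : (0:ℝ) ≤ 1)]
    have h1 : IntervalIntegrable
        (fun x : ℝ => t ^ (b-1) * t ^ (c-1) * (x ^ (c - 1) * (1 - x) ^ (b - 1))) volume 0 1 :=
      (hbeta.1).const_mul _
    rw [intervalIntegrable_iff_integrableOn_Ioc_of_le (by norm_num : (0:ℝ) ≤ 1)] at h1
    refine h1.congr_fun ?_ measurableSet_Ioc
    intro x hx
    exact (hcomp x (by rw [uIcc_of_le (by norm_num : (0:ℝ) ≤ 1)]; exact Ioc_subset_Icc_self hx)).symm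
  have hft : IntervalIntegrable f volume 0 t := by
    have := (IntervalIntegrable.comp_mul_left_iff (f := f) (c := t) (a := 0) (b := t) ht.ne').mp
    rw [zero_div, div_self ht.ne'] at this
    exact this hg
  constructor
  · exact (hft.1.mono_set Ioo_subset_Ioc_self)
  · have hIoo : ∫ s in Ioo (0:ℝ) t, f s = ∫ s in (0:ℝ)..t, f s := by
      rw [intervalIntegral.integral_of_le ht.le, integral_Ioc_eq_integral_Ioo]
    rw [hIoo]
    have hsub : ∫ x in (0:ℝ)..1, f (t * x) = t⁻¹ • ∫ s in (0:ℝ)..t, f s := by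
      have := intervalIntegral.integral_comp_mul_left f ht.ne' (a := 0) (b := 1)
      simpa using this
    have hval : ∫ x in (0:ℝ)..1, f (t * x)
        = t ^ (b-1) * t ^ (c-1) * (Real.Gamma c * Real.Gamma b / Real.Gamma (c + b)) := by
      rw [intervalIntegral.integral_congr hcomp, intervalIntegral.integral_const_mul, hbeta.2]
    rw [hval] at hsub
    have hts : t ^ (b-1) * t ^ (c-1) * t = t ^ (b + c - 1) := by
      rw [← Real.rpow_add ht, ← Real.rpow_add_one ht.ne',
        show b - 1 + (c - 1) + 1 = b + c - 1 by ring]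
    have := congrArg (fun z => t * z) hsub
    simp only [smul_eq_mul, ← mul_assoc, mul_inv_cancel₀ ht.ne', one_mul] at this
    rw [← this, add_comm c b, ← hts]
    ring

lemma meas_rpow_const (c : ℝ) : Measurable fun x : ℝ => x ^ c := by measurability

lemma mittagLeffler_zero (β : ℝ) : mittagLeffler β 0 = 1 := by
  rw [mittagLeffler, tsum_eq_single 0]
  · simp [Real.Gamma_one]
  · intro k hk
    simp [zero_pow hk]

/-- The Mittag-Leffler relaxation function `u(r) = E_{β,1}(-a r^β)` satisfies the
Volterra integral equation `u(t) = 1 - (a/Γ(β)) ∫_0^t (t-s)^(β-1) u(s) ds`,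
the integral being a convergent Lebesgue integral on `(0,t)`. -/
theorem mittagLeffler_volterra_equation
    (β a : ℝ) (hβ0 : 0 < β) (hβ1 : β < 1) (t : ℝ) (ht : 0 ≤ t) :
    IntegrableOn
        (fun s : ℝ => (t - s) ^ (β - 1) * mittagLeffler β (-(a * s ^ β)))
        (Ioo 0 t) volume ∧
      mittagLeffler β (-(a * t ^ β))
        = 1 - (a / Real.Gamma β) *
            ∫ s in Ioo (0 : ℝ) t,
              (t - s) ^ (β - 1) * mittagLeffler β (-(a * s ^ β)) := by
  rcases eq_or_lt_of_le ht with rfl | ht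
  · -- t = 0
    simp only [Ioo_self, integrableOn_empty, Measure.restrict_empty, integral_zero_measure,
      mul_zero, sub_zero, Real.zero_rpow hβ0.ne', mul_zero, neg_zero, true_and]
    rw [mittagLeffler_zero β]
  -- t > 0 from here on
  have hΓβ : 0 < Real.Gamma β := Real.Gamma_pos_of_pos hβ0
  set F : ℕ → ℝ → ℝ := fun k s =>
    ((-a) ^ k / Real.Gamma (β * k + 1)) * ((t - s) ^ (β - 1) * s ^ (β * k)) with hF
  -- pointwise identity on Ioo
  have hFcongr : ∀ s ∈ Ioo (0:ℝ) t,
      (t - s) ^ (β - 1) * mittagLeffler β (-(a * s ^ β)) = ∑' k, F k s := by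
    intro s hs
    have hs0 : (0:ℝ) ≤ s := hs.1.le
    have hterm : ∀ k : ℕ, F k s
        = (t - s) ^ (β - 1) * ((-(a * s ^ β)) ^ k / Real.Gamma (β * k + 1)) := by
      intro k
      have h1 : (-(a * s ^ β)) ^ k = (-a) ^ k * s ^ (β * k) := by
        rw [← neg_mul, mul_pow, ← Real.rpow_natCast (s ^ β) k, ← Real.rpow_mul hs0]
      rw [hF, h1]; ring
    rw [mittagLeffler, ← tsum_mul_left]
    exact (tsum_congr hterm).symm
  -- Beta integral facts per k
  have hβk : ∀ k : ℕ, (0:ℝ) < β * k + 1 := fun k => by positivity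
  have hbk := fun k : ℕ => beta_Ioo β (β * k + 1) t hβ0 (hβk k) ht
  have hsimp : ∀ k : ℕ, (fun s : ℝ => (t - s) ^ (β - 1) * s ^ (β * k + 1 - 1))
      = fun s : ℝ => (t - s) ^ (β - 1) * s ^ (β * k) := by
    intro k; funext s; norm_num
  -- integrability of each F k
  have hFint : ∀ k : ℕ, IntegrableOn (F k) (Ioo 0 t) volume := by
    intro k
    have := (hbk k).1
    rw [hsimp k] at this
    exact this.const_mul _
  -- value of each integral
  have hIval : ∀ k : ℕ, ∫ s in Ioo (0:ℝ) t, (t - s) ^ (β - 1) * s ^ (β * k)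
      = Real.Gamma β * Real.Gamma (β * k + 1) / Real.Gamma (β * (k+1) + 1)
        * ((t ^ β) ^ k * t ^ β) := by
    intro k
    have := (hbk k).2
    rw [hsimp k] at this
    rw [this]
    have he1 : β + (β * k + 1) = β * (k + 1) + 1 := by push_cast; ring
    rw [he1, show β * ((k:ℝ) + 1) + 1 - 1 = β * k + β by ring, Real.rpow_add ht,
      Real.rpow_mul ht.le, Real.rpow_natCast]
  have hFval : ∀ k : ℕ, ∫ s in Ioo (0:ℝ) t, F k s
      = Real.Gamma β * ((-(a * t ^ β)) ^ k * t ^ β / Real.Gamma (β * (k+1) + 1)) := by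
    intro k
    rw [hF]
    simp only
    rw [integral_const_mul, hIval k]
    have hx : (-(a * t ^ β)) ^ k = (-a) ^ k * (t ^ β) ^ k := by
      rw [← neg_mul, mul_pow]
    rw [hx]
    field_simp [(Real.Gamma_pos_of_pos (hβk k)).ne']
  -- norm integrals
  have hnorm : ∀ k : ℕ, ∫ s in Ioo (0:ℝ) t, ‖F k s‖
      = Real.Gamma β * ((|a| * t ^ β) ^ k * t ^ β / Real.Gamma (β * (k+1) + 1)) := by
    intro k
    have hcongr : EqOn (fun s => ‖F k s‖)
        (fun s => (|a| ^ k / Real.Gamma (β * k + 1)) * ((t - s) ^ (β - 1) * s ^ (β * k)))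
        (Ioo 0 t) := by
      intro s hs
      have h1 : (0:ℝ) ≤ (t - s) ^ (β - 1) := Real.rpow_nonneg (by linarith [hs.2]) _
      have h2 : (0:ℝ) ≤ s ^ (β * k) := Real.rpow_nonneg hs.1.le _
      simp only [hF, norm_mul, Real.norm_eq_abs, abs_div, abs_pow, abs_neg,
        abs_of_pos (Real.Gamma_pos_of_pos (hβk k)),
        abs_of_nonneg h1, abs_of_nonneg h2]
    rw [setIntegral_congr_fun measurableSet_Ioo hcongr, integral_const_mul, hIval k]
    have hx : (|a| * t ^ β) ^ k = |a| ^ k * (t ^ β) ^ k := mul_pow _ _ _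
    rw [hx]
    field_simp [(Real.Gamma_pos_of_pos (hβk k)).ne']
  -- summability of the norm integrals
  have hsumnorm : Summable (fun k : ℕ => ∫ s in Ioo (0:ℝ) t, ‖F k s‖) := by
    have h1 : Summable (fun k : ℕ => (|a| * t ^ β) ^ k / Real.Gamma (β * k + (β + 1))) :=
      ml_summable β (β + 1) _ hβ0 hβ1 (by linarith)
    have h2 : Summable (fun k : ℕ =>
        Real.Gamma β * ((|a| * t ^ β) ^ k * t ^ β / Real.Gamma (β * (k+1) + 1))) := by
      have := (h1.mul_left (Real.Gamma β * t ^ β))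
      refine this.congr fun k => ?_
      rw [show β * ((k:ℕ):ℝ) + (β + 1) = β * ((k:ℕ)+1) + 1 by ring]
      push_cast
      ring
    exact h2.congr fun k => (hnorm k).symm
  -- interchange
  have hswap :
      ∑' k : ℕ, ∫ s in Ioo (0:ℝ) t, F k s = ∫ s in Ioo (0:ℝ) t, ∑' k : ℕ, F k s :=
    integral_tsum_of_summable_integral_norm hFint hsumnorm
  -- measurability of the Mittag-Leffler composite
  have hEmeas : Measurable fun s : ℝ => mittagLeffler β (-(a * s ^ β)) := by
    apply measurable_of_tendsto_metrizable
      (f := fun n s => ∑ k ∈ Finset.range n, (-(a * s ^ β)) ^ k / Real.Gamma (β * k + 1))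
    · intro n
      apply Finset.measurable_sum
      intro k _
      apply Measurable.div_const
      apply Measurable.pow_const
      apply Measurable.neg
      apply Measurable.const_mul
      exact meas_rpow_const β
    · rw [tendsto_pi_nhds]
      intro s
      exact (ml_summable β 1 _ hβ0 hβ1 le_rfl).hasSum.tendsto_sum_nat
  have hmeas : AEStronglyMeasurable
      (fun s : ℝ => (t - s) ^ (β - 1) * mittagLeffler β (-(a * s ^ β)))
      (volume.restrict (Ioo 0 t)) := by
    apply Measurable.aestronglyMeasurable
    apply Measurable.mul _ hEmeas
    exact (meas_rpow_const (β - 1)).comp (measurable_const.sub measurable_id)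
  -- integrability of the full integrand
  have hsumNat : ∀ x : ℝ, Summable (fun k : ℕ => x ^ k / Real.Gamma (β * k + 1)) :=
    fun x => ml_summable β 1 x hβ0 hβ1 le_rfl
  have habs : Summable (fun k : ℕ => |a| ^ k * (t ^ β) ^ k / Real.Gamma (β * k + 1)) := by
    refine (hsumNat (|a| * t ^ β)).congr fun k => ?_
    rw [mul_pow]
  set C : ℝ := ∑' k : ℕ, (|a| * t ^ β) ^ k / Real.Gamma (β * k + 1) with hC
  have hbound : ∀ s ∈ Ioo (0:ℝ) t, |mittagLeffler β (-(a * s ^ β))| ≤ C := by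
    intro s hs
    have h1 : Summable (fun k : ℕ => ‖(-(a * s ^ β)) ^ k / Real.Gamma (β * k + 1)‖) := by
      refine (hsumNat (|a| * s ^ β)).congr fun k => ?_
      rw [norm_div, norm_pow, Real.norm_eq_abs, Real.norm_eq_abs, abs_neg, abs_mul,
        abs_of_nonneg (Real.rpow_nonneg hs.1.le _),
        abs_of_pos (Real.Gamma_pos_of_pos (hβk k))]
    calc |mittagLeffler β (-(a * s ^ β))|
        ≤ ∑' k : ℕ, ‖(-(a * s ^ β)) ^ k / Real.Gamma (β * k + 1)‖ :=
          norm_tsum_le_tsum_norm h1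
      _ ≤ C := by
          refine Summable.tsum_le_tsum (fun k => ?_) h1 (hsumNat (|a| * t ^ β))
          rw [norm_div, norm_pow, Real.norm_eq_abs, Real.norm_eq_abs, abs_neg, abs_mul,
            abs_of_nonneg (Real.rpow_nonneg hs.1.le _),
            abs_of_pos (Real.Gamma_pos_of_pos (hβk k))]
          have hsβ : s ^ β ≤ t ^ β := Real.rpow_le_rpow hs.1.le hs.2.le hβ0.le
          have hnum : (|a| * s ^ β) ^ k ≤ (|a| * t ^ β) ^ k :=
            pow_le_pow_left₀ (mul_nonneg (abs_nonneg a) (Real.rpow_nonneg hs.1.le β))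
              (mul_le_mul_of_nonneg_left hsβ (abs_nonneg a)) k
          exact div_le_div_of_nonneg_right hnum (Real.Gamma_pos_of_pos (hβk k)).le |>.trans le_rfl
  -- integrability of the full integrand
  have hg : IntegrableOn (fun s : ℝ => C * (t - s) ^ (β - 1)) (Ioo 0 t) volume := by
    have h0 := (beta_Ioo β 1 t hβ0 one_pos ht).1
    have heq : (fun s : ℝ => (t - s) ^ (β - 1) * s ^ ((1:ℝ) - 1))
        = fun s : ℝ => (t - s) ^ (β - 1) := by
      funext s; norm_num
    rw [heq] at h0
    exact h0.const_mul C
  have hInt : IntegrableOn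
      (fun s : ℝ => (t - s) ^ (β - 1) * mittagLeffler β (-(a * s ^ β))) (Ioo 0 t) volume := by
    refine Integrable.mono' hg hmeas ?_
    rw [ae_restrict_iff' measurableSet_Ioo]
    refine ae_of_all _ fun s hs => ?_
    have h1 : (0:ℝ) ≤ (t - s) ^ (β - 1) := Real.rpow_nonneg (by linarith [hs.2]) _
    rw [Real.norm_eq_abs, abs_mul, abs_of_nonneg h1]
    calc (t - s) ^ (β - 1) * |mittagLeffler β (-(a * s ^ β))|
        ≤ (t - s) ^ (β - 1) * C := mul_le_mul_of_nonneg_left (hbound s hs) h1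
      _ = C * (t - s) ^ (β - 1) := mul_comm _ _
  refine ⟨hInt, ?_⟩
  -- the sum S
  set S : ℝ := ∑' k : ℕ, (-(a * t ^ β)) ^ k / Real.Gamma (β * (k + 1) + 1) with hSdef
  have hIoo : ∫ s in Ioo (0:ℝ) t, (t - s) ^ (β - 1) * mittagLeffler β (-(a * s ^ β))
      = Real.Gamma β * t ^ β * S := by
    rw [setIntegral_congr_fun measurableSet_Ioo hFcongr, ← hswap]
    calc ∑' k : ℕ, ∫ s in Ioo (0:ℝ) t, F k s
        = ∑' k : ℕ, Real.Gamma β * t ^ β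
            * ((-(a * t ^ β)) ^ k / Real.Gamma (β * (k + 1) + 1)) := by
          refine tsum_congr fun k => ?_
          rw [hFval k]; ring
      _ = Real.Gamma β * t ^ β * S := tsum_mul_left
  have hE : mittagLeffler β (-(a * t ^ β)) = 1 + (-(a * t ^ β)) * S := by
    rw [mittagLeffler, Summable.tsum_eq_zero_add (hsumNat _)]
    congr 1
    · norm_num [Real.Gamma_one]
    · calc ∑' k : ℕ, (-(a * t ^ β)) ^ (k + 1) / Real.Gamma (β * ((k:ℕ) + 1 : ℕ) + 1)
          = ∑' k : ℕ, -(a * t ^ β)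
              * ((-(a * t ^ β)) ^ k / Real.Gamma (β * (k + 1) + 1)) := by
            refine tsum_congr fun k => ?_
            push_cast
            ring
        _ = -(a * t ^ β) * S := tsum_mul_left
  rw [hE, hIoo]
  have hclear : a / Real.Gamma β * (Real.Gamma β * t ^ β * S) = a * t ^ β * S := by
    field_simp
  rw [hclear]
  ring
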